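/- Superlinearity of the infimal coercivity function: the function Υ : [0,∞) → ℝ defined by Υ(u) := inf_{λ ∈ [0,1)} [ ((1 − λ)/2)·u² + H_λ(u + 1/2) + H_λ(1/2 − u) ] satisfies Υ(u) ≥ 0 for all u ≥ 0 and Υ(u)/u → +∞ as u → +∞. -/

import Mathlib

/-- The regularized entropy `H_λ` (for `λ ∈ [0,1)`). -/
noncomputable def Hlam (lam c : ℝ) : ℝ :=
  if c ≤ (1 - lam) / 2 then c * Real.log ((1 - lam) / (1 + lam)) + lam
  else if c ≤ (1 + lam) / 2 then c * Real.log (2 * c / (1 + lam)) - c + (1 + lam) / 2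
  else 0

/-- The infimal coercivity function
`Υ(u) = inf_{λ ∈ [0,1)} [ ((1-λ)/2) u² + H_λ(u + 1/2) + H_λ(1/2 - u) ]`. -/
noncomputable def Ups (u : ℝ) : ℝ :=
  ⨅ lam : Set.Ico (0:ℝ) 1,
    ((1 - (lam : ℝ)) / 2 * u ^ 2 + Hlam lam (u + 1/2) + Hlam lam (1/2 - u))

-- key inequality: for a,c > 0, c log(2c/a) - c + a/2 ≥ 0
lemma key_ineq (a c : ℝ) (ha : 0 < a) (hc : 0 < c) :
    0 ≤ c * Real.log (2 * c / a) - c + a / 2 := by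
  have h1 : Real.log (a / (2 * c)) ≤ a / (2 * c) - 1 :=
    Real.log_le_sub_one_of_pos (by positivity)
  have h2 : Real.log (2 * c / a) = - Real.log (a / (2 * c)) := by
    rw [← Real.log_inv]; congr 1; field_simp
  have h3 : 1 - a / (2 * c) ≤ Real.log (2 * c / a) := by rw [h2]; linarith
  have h4 := mul_le_mul_of_nonneg_left h3 hc.le
  have h5 : c * (1 - a / (2 * c)) = c - a / 2 := by field_simp
  linarith [h4, h5.symm.le]

lemma Hlam_nonneg (lam c : ℝ) (h0 : 0 ≤ lam) (h1 : lam < 1) : 0 ≤ Hlam lam c := by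
  have hone : (0:ℝ) < 1 + lam := by linarith
  have honem : (0:ℝ) < 1 - lam := by linarith
  unfold Hlam
  split_ifs with hc1 hc2
  · -- c ≤ (1-lam)/2
    have hk := key_ineq (1 + lam) ((1 - lam) / 2) hone (by linarith)
    have harg : 2 * ((1 - lam) / 2) / (1 + lam) = (1 - lam) / (1 + lam) := by ring
    rw [harg] at hk
    have hL : Real.log ((1 - lam) / (1 + lam)) ≤ 0 := by
      apply Real.log_nonpos (by positivity)
      rw [div_le_one hone]; linarith
    nlinarith [mul_le_mul_of_nonpos_right hc1 hL]
  · -- (1-lam)/2 < c ≤ (1+lam)/2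
    exact key_ineq (1 + lam) c hone (by push_neg at hc1; linarith)
  · exact le_refl 0

-- minimization inequality: for a,b,t > 0: b(1+log(a/b)) ≤ a t - b log t
lemma aux_min (a b t : ℝ) (ha : 0 < a) (hb : 0 < b) (ht : 0 < t) :
    b * (1 + Real.log (a / b)) ≤ a * t - b * Real.log t := by
  have h1 : Real.log (a / b * t) ≤ a / b * t - 1 :=
    Real.log_le_sub_one_of_pos (by positivity)
  have h2 : Real.log (a / b * t) = Real.log (a / b) + Real.log t :=
    Real.log_mul (by positivity) ht.ne'
  have h3 := mul_le_mul_of_nonneg_left h1 hb.le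
  rw [h2] at h3
  have h4 : b * (a / b * t - 1) = a * t - b := by field_simp
  nlinarith [h3]

-- lower bound for Ups for u ≥ 1
lemma Ups_lower (u : ℝ) (hu : 1 ≤ u) :
    (u - 1/2) * (1 + Real.log (u ^ 2 / 2 / (u - 1/2))) ≤ Ups u := by
  haveI : Nonempty (Set.Ico (0:ℝ) 1) := ⟨⟨0, by norm_num⟩⟩
  apply le_ciInf
  rintro ⟨lam, h0, h1⟩
  simp only
  have hone : (0:ℝ) < 1 + lam := by linarith
  have honem : (0:ℝ) < 1 - lam := by linarith
  have hH1 : Hlam lam (u + 1/2) = 0 := by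
    unfold Hlam
    rw [if_neg (by linarith), if_neg (by linarith)]
  have hH2 : Hlam lam (1/2 - u) =
      (1/2 - u) * Real.log ((1 - lam) / (1 + lam)) + lam := by
    unfold Hlam
    rw [if_pos (by linarith)]
  rw [hH1, hH2]
  -- log((1-λ)/(1+λ)) ≤ log(1-λ)
  have hlog : Real.log ((1 - lam) / (1 + lam)) ≤ Real.log (1 - lam) := by
    apply Real.log_le_log (by positivity)
    rw [div_le_iff₀ hone]; nlinarith
  have hmul : (1/2 - u) * Real.log (1 - lam) ≤
      (1/2 - u) * Real.log ((1 - lam) / (1 + lam)) :=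
    mul_le_mul_of_nonpos_left hlog (by linarith)
  have hmin := aux_min (u ^ 2 / 2) (u - 1/2) (1 - lam)
    (by nlinarith) (by linarith) honem
  have hrw : (u ^ 2 / 2) * (1 - lam) - (u - 1/2) * Real.log (1 - lam)
      = (1 - lam) / 2 * u ^ 2 + (1/2 - u) * Real.log (1 - lam) := by ring
  rw [hrw] at hmin
  linarith

/-- Superlinearity of the infimal coercivity function: `Υ ≥ 0` on `[0,∞)` and
`Υ(u)/u → +∞` as `u → +∞`. -/
theorem Ups_nonneg_superlinear :
    (∀ u : ℝ, 0 ≤ u → 0 ≤ Ups u) ∧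
      Filter.Tendsto (fun u => Ups u / u) Filter.atTop Filter.atTop := by
  constructor
  · intro u hu
    apply Real.iInf_nonneg
    rintro ⟨lam, h0, h1⟩
    have := Hlam_nonneg lam (u + 1/2) h0 h1
    have := Hlam_nonneg lam (1/2 - u) h0 h1
    have : (0:ℝ) ≤ (1 - lam) / 2 * u ^ 2 := by nlinarith [sq_nonneg u]
    simp only
    linarith [Hlam_nonneg lam (u + 1/2) h0 h1, Hlam_nonneg lam (1/2 - u) h0 h1]
  · have hbound : ∀ u : ℝ, 1 ≤ u → (1/2) * (1 + Real.log (u / 2)) ≤ Ups u / u := by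
      intro u hu
      have hu0 : (0:ℝ) < u := by linarith
      have h1 := Ups_lower u hu
      -- compare (u-1/2)(1+log(u²/2/(u-1/2))) ≥ (u/2)(1+log(u/2))
      have hlog2 : Real.log (u / 2) ≤ Real.log (u ^ 2 / 2 / (u - 1/2)) := by
        apply Real.log_le_log (by positivity)
        rw [le_div_iff₀ (by linarith)]
        nlinarith
      have hpos : (0:ℝ) ≤ 1 + Real.log (u / 2) := by
        have h2 : Real.log 2 < 1 := by
          have := Real.log_two_lt_d9; linarith
        have : Real.log (1/2) ≤ Real.log (u/2) :=
          Real.log_le_log (by norm_num) (by linarith)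
        rw [Real.log_div one_ne_zero two_ne_zero, Real.log_one] at this
        linarith
      have hstep : (u/2) * (1 + Real.log (u / 2)) ≤
          (u - 1/2) * (1 + Real.log (u ^ 2 / 2 / (u - 1/2))) := by
        apply mul_le_mul (by linarith) (by linarith) hpos (by linarith)
      have : (u/2) * (1 + Real.log (u / 2)) ≤ Ups u := le_trans hstep h1
      rw [le_div_iff₀ hu0]
      calc (1/2) * (1 + Real.log (u / 2)) * u = (u/2) * (1 + Real.log (u / 2)) := by ring
        _ ≤ Ups u := this
    have htend : Filter.Tendsto (fun u : ℝ => (1/2) * (1 + Real.log (u / 2)))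
        Filter.atTop Filter.atTop := by
      apply Filter.Tendsto.const_mul_atTop (by norm_num : (0:ℝ) < 1/2)
      apply Filter.tendsto_atTop_add_const_left
      exact Real.tendsto_log_atTop.comp (Filter.tendsto_id.atTop_div_const (by norm_num))
    exact Filter.tendsto_atTop_mono' _
      (Filter.eventually_atTop.mpr ⟨1, fun u hu => hbound u hu⟩) htend
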